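/- Let R = ℝ[W₁,W₂]/(W₁² + W₂² − 1) with w₁, w₂ the images of W₁, W₂. Then the ideal I = (w₁, 1 − w₂) of R is a projective R-module of rank one that is not principal (not free). -/
import Mathlib
set_option maxHeartbeats 1000000
set_option synthInstance.maxHeartbeats 400000

open MvPolynomial

/-- The coordinate ring of the real circle. -/
noncomputable abbrev CircleRing : Type :=
  MvPolynomial (Fin 2) ℝ ⧸
    Ideal.span {((X 0) ^ 2 + (X 1) ^ 2 - 1 : MvPolynomial (Fin 2) ℝ)}

section EisensteinPart

lemma irr_q : Irreducible ((Polynomial.X : Polynomial (Polynomial ℝ))^2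
    +  Polynomial.C ((Polynomial.X : Polynomial ℝ)^2 - 1)) := by
  set q : Polynomial (Polynomial ℝ) := Polynomial.X^2 +  Polynomial.C ((Polynomial.X : Polynomial ℝ)^2 - 1) with hq
  have hmonic : q.Monic := Polynomial.monic_X_pow_add_C _ (by norm_num)
  have hdeg : q.natDegree = 2 := by rw [hq]; compute_degree!
  have hc0 : q.coeff 0 = (Polynomial.X : Polynomial ℝ)^2 - 1 := by
    rw [hq, Polynomial.coeff_add, Polynomial.coeff_X_pow, Polynomial.coeff_C]; norm_num
  have hc1 : q.coeff 1 = 0 := by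
    rw [hq, Polynomial.coeff_add, Polynomial.coeff_X_pow, Polynomial.coeff_C]; norm_num
  have hP : (Ideal.span {(Polynomial.X : Polynomial ℝ) - Polynomial.C 1}).IsPrime :=
    (Ideal.span_singleton_prime (Polynomial.X_sub_C_ne_zero 1)).2 (Polynomial.prime_X_sub_C 1)
  have heis : q.IsEisensteinAt (Ideal.span {(Polynomial.X : Polynomial ℝ) - Polynomial.C 1}) := by
    constructor
    · rw [hmonic.leadingCoeff]
      intro h
      exact hP.ne_top (Ideal.eq_top_of_isUnit_mem _ h isUnit_one)
    · intro n hn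
      rw [hdeg] at hn
      interval_cases n
      · rw [hc0, Ideal.mem_span_singleton]
        exact ⟨Polynomial.X + Polynomial.C 1, by rw [Polynomial.C_1]; ring⟩
      · rw [hc1]; exact Ideal.zero_mem _
    · rw [hc0, Ideal.span_singleton_pow, Ideal.mem_span_singleton]
      intro hdvd
      have h1 : ((Polynomial.X : Polynomial ℝ) - Polynomial.C 1)^2 ∣ (Polynomial.X - Polynomial.C 1) * (Polynomial.X + Polynomial.C 1) := by
        have he : (Polynomial.X : Polynomial ℝ)^2 - 1 = (Polynomial.X - Polynomial.C 1) * (Polynomial.X + Polynomial.C 1) := by rw [Polynomial.C_1]; ring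
        rwa [he] at hdvd
      rw [pow_two] at h1
      have h2 : ((Polynomial.X : Polynomial ℝ) - Polynomial.C 1) ∣ (Polynomial.X + Polynomial.C 1) :=
        (mul_dvd_mul_iff_left (Polynomial.X_sub_C_ne_zero (1:ℝ))).1 h1
      rw [Polynomial.dvd_iff_isRoot] at h2
      simp [Polynomial.IsRoot] at h2
  exact heis.irreducible hP hmonic.isPrimitive (by rw [hdeg]; norm_num)

end EisensteinPart

noncomputable def circEquiv : MvPolynomial (Fin 2) ℝ ≃+* Polynomial (Polynomial ℝ) :=
  (MvPolynomial.finSuccEquiv ℝ 1).toRingEquiv.trans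
    (Polynomial.mapEquiv
      (((MvPolynomial.finSuccEquiv ℝ 0).toRingEquiv.trans
        (Polynomial.mapEquiv (MvPolynomial.isEmptyAlgEquiv ℝ (Fin 0)).toRingEquiv))))

lemma circEquiv_gen :
    circEquiv ((X 0)^2 + (X 1)^2 - 1 : MvPolynomial (Fin 2) ℝ) =
      (Polynomial.X)^2 + Polynomial.C ((Polynomial.X : Polynomial ℝ)^2 - 1) := by
  have h1 : (X 1 : MvPolynomial (Fin 2) ℝ) = X (Fin.succ 0) := rfl
  rw [map_sub, map_add, map_one, map_pow, map_pow, h1]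
  simp only [circEquiv, RingEquiv.trans_apply, AlgEquiv.toRingEquiv_eq_coe,
    AlgEquiv.coe_ringEquiv, finSuccEquiv_X_zero, finSuccEquiv_X_succ,
    Polynomial.mapEquiv_apply, Polynomial.map_X, Polynomial.map_C,
    RingEquiv.coe_toRingHom, RingHom.coe_coe]
  rw [map_sub, map_one, map_pow]
  ring

lemma prime_gen : Prime ((X 0)^2 + (X 1)^2 - 1 : MvPolynomial (Fin 2) ℝ) := by
  rw [← UniqueFactorizationMonoid.irreducible_iff_prime]
  have h := irr_q
  rw [← circEquiv_gen] at h
  exact h.of_map (f := circEquiv)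

lemma gen_ne_zero : ((X 0)^2 + (X 1)^2 - 1 : MvPolynomial (Fin 2) ℝ) ≠ 0 :=
  prime_gen.ne_zero

instance circleRing_domain : IsDomain CircleRing := by
  rw [Ideal.Quotient.isDomain_iff_prime]
  exact (Ideal.span_singleton_prime gen_ne_zero).2 prime_gen

noncomputable def evAt (θ : ℝ) : CircleRing →+* ℝ :=
  Ideal.Quotient.lift _
    ((MvPolynomial.eval ![Real.cos θ, Real.sin θ] : MvPolynomial (Fin 2) ℝ →+* ℝ))
    (by
      intro p hp
      rw [Ideal.mem_span_singleton'] at hp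
      obtain ⟨g, rfl⟩ := hp
      rw [map_mul]
      have : (MvPolynomial.eval ![Real.cos θ, Real.sin θ])
          ((X 0)^2 + (X 1)^2 - 1 : MvPolynomial (Fin 2) ℝ) = 0 := by
        simp [Real.cos_sq_add_sin_sq]
      rw [this, mul_zero])

lemma evAt_mk (θ : ℝ) (p : MvPolynomial (Fin 2) ℝ) :
    evAt θ (Ideal.Quotient.mk _ p) = MvPolynomial.eval ![Real.cos θ, Real.sin θ] p :=
  rfl

lemma cont_evAt (z : CircleRing) : Continuous fun θ => evAt θ z := by
  obtain ⟨p, rfl⟩ := Ideal.Quotient.mk_surjective z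
  simp only [evAt_mk]
  have hc : Continuous fun θ : ℝ => (![Real.cos θ, Real.sin θ] : Fin 2 → ℝ) := by
    refine continuous_pi fun i => ?_
    fin_cases i <;> simp [Real.continuous_cos, Real.continuous_sin]
  exact (MvPolynomial.continuous_eval p).comp hc

lemma evAt_periodic (z : CircleRing) (θ : ℝ) : evAt (θ + 2 * Real.pi) z = evAt θ z := by
  obtain ⟨p, rfl⟩ := Ideal.Quotient.mk_surjective z
  simp [evAt_mk, Real.cos_add_two_pi, Real.sin_add_two_pi]

lemma evAt_w₁ (θ : ℝ) : evAt θ (Ideal.Quotient.mk _ (X 0)) = Real.cos θ := by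
  simp [evAt_mk]

lemma evAt_w₂ (θ : ℝ) : evAt θ (Ideal.Quotient.mk _ (X 1)) = Real.sin θ := by
  simp [evAt_mk]

lemma circle_rel :
    (Ideal.Quotient.mk (Ideal.span {((X 0) ^ 2 + (X 1) ^ 2 - 1 : MvPolynomial (Fin 2) ℝ)}) (X 0))^2
      + (Ideal.Quotient.mk _ (X 1))^2 - 1 = 0 := by
  have h : Ideal.Quotient.mk (Ideal.span {((X 0) ^ 2 + (X 1) ^ 2 - 1 : MvPolynomial (Fin 2) ℝ)})
      ((X 0) ^ 2 + (X 1) ^ 2 - 1) = 0 :=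
    Ideal.Quotient.eq_zero_iff_mem.mpr (Ideal.subset_span rfl)
  rw [map_sub, map_add, map_pow, map_pow, map_one] at h
  exact h

/-- In `R = ℝ[W₁,W₂]/(W₁²+W₂²-1)`, the ideal `I = (w₁, 1-w₂)` is a rank-one
projective `R`-module that is not principal (not free). -/
theorem stmt_9 (w₁ w₂ : CircleRing)
    (hw₁ : w₁ = Ideal.Quotient.mk _ (X 0)) (hw₂ : w₂ = Ideal.Quotient.mk _ (X 1))
    (I : Ideal CircleRing) (hI : I = Ideal.span {w₁, 1 - w₂}) :
    Module.Projective CircleRing I ∧ Module.rank CircleRing I = 1 ∧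
      ¬ I.IsPrincipal := by
  subst hw₁ hw₂ hI
  set R := CircleRing
  set w₁ : R := Ideal.Quotient.mk _ (X 0) with hw₁
  set w₂ : R := Ideal.Quotient.mk _ (X 1) with hw₂
  set v : R := 1 - w₂ with hv_def
  have hrel : w₁^2 + w₂^2 - 1 = 0 := circle_rel
  have hv : v ≠ 0 := by
    intro h
    have := congrArg (evAt 0) h
    rw [map_zero, map_sub, map_one, hw₂, evAt_w₂] at this
    simp at this
  have hw₁mem : w₁ ∈ Ideal.span {w₁, v} := Ideal.subset_span (by simp)
  have hvmem : v ∈ Ideal.span {w₁, v} := Ideal.subset_span (by simp)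
  set I : Ideal R := Ideal.span {w₁, v} with hI
  set half : R := Ideal.Quotient.mk _ (MvPolynomial.C (1/2 : ℝ)) with hhalf
  have h2 : half + half = 1 := by
    rw [hhalf, ← map_add, ← MvPolynomial.C_add]
    norm_num
  -- existence of division by v
  have hex : ∀ z : R, z ∈ I → ∃ u : R, u * v = half * (z * w₁) := by
    intro z hz
    rw [hI, Ideal.mem_span_pair] at hz
    obtain ⟨x, y, rfl⟩ := hz
    exact ⟨half * (x * (1 + w₂) + y * w₁), by linear_combination (-(half * x)) * hrel⟩
  have proj : Module.Projective R I := by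
    classical
    set g : I → R := fun z => (hex z z.2).choose with hg
    have gspec : ∀ z : I, g z * v = half * ((z : R) * w₁) := fun z => (hex z z.2).choose_spec
    have gadd : ∀ z z' : I, g (z + z') = g z + g z' := by
      intro z z'
      apply mul_right_cancel₀ hv
      rw [gspec, add_mul, gspec, gspec, Submodule.coe_add]
      ring
    have gsmul : ∀ (r : R) (z : I), g (r • z) = r * g z := by
      intro r z
      apply mul_right_cancel₀ hv
      rw [gspec, mul_assoc, gspec, Submodule.coe_smul, smul_eq_mul]
      ring
    set i : I →ₗ[R] R × R :=
      { toFun := fun z => (g z, half * (z : R))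
        map_add' := fun z z' => by
          simp only [Submodule.coe_add, gadd, Prod.mk_add_mk]
          exact congrArg _ (by ring)
        map_smul' := fun r z => by
          simp only [Submodule.coe_smul, smul_eq_mul, gsmul, RingHom.id_apply, Prod.smul_mk,
            smul_eq_mul]
          exact congrArg _ (by ring) } with hi
    set s : R × R →ₗ[R] I :=
      { toFun := fun p => ⟨p.1 * w₁ + p.2 * v,
          I.add_mem (I.mul_mem_left p.1 hw₁mem) (I.mul_mem_left p.2 hvmem)⟩
        map_add' := fun p q => by
          apply Subtype.ext
          simp only [Prod.fst_add, Prod.snd_add, Submodule.coe_add]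
          ring
        map_smul' := fun r p => by
          apply Subtype.ext
          simp only [Prod.smul_fst, Prod.smul_snd, smul_eq_mul, RingHom.id_apply,
            SetLike.val_smul]
          ring } with hs
    refine Module.Projective.of_split i s ?_
    ext z
    have hz : g z * w₁ + (half * (z : R)) * v = (z : R) := by
      apply mul_right_cancel₀ hv
      have hgz := gspec z
      linear_combination w₁ * hgz + (half * (z : R)) * hrel + ((z : R) * v) * h2
    simpa [hs, hi] using hz
  have hrank : Module.rank R I = 1 := by
    have hle : Module.rank R I ≤ 1 := by
      have := Submodule.rank_le I
      rwa [Module.rank_self] at this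
    have hlt : 0 < Module.rank R I := by
      rw [rank_pos_iff_exists_ne_zero]
      refine ⟨⟨v, hvmem⟩, ?_⟩
      simp [Submodule.mk_eq_zero, hv]
    exact le_antisymm hle (Cardinal.one_le_iff_pos.mpr hlt)
  refine ⟨proj, hrank, ?_⟩
  rintro ⟨⟨f, hf⟩⟩
  rw [Ideal.submodule_span_eq] at hf
  have hfI : f ∈ I := by rw [hf]; exact Ideal.subset_span rfl
  obtain ⟨c, d, hcd⟩ := Ideal.mem_span_pair.1 (by rw [hI] at hfI; exact hfI)
  obtain ⟨a, ha⟩ := Ideal.mem_span_singleton'.1 (by rw [hf] at hw₁mem; exact hw₁mem)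
  obtain ⟨b, hb⟩ := Ideal.mem_span_singleton'.1 (by rw [hf] at hvmem; exact hvmem)
  set F : ℝ → ℝ := fun θ => evAt θ f with hF
  set A : ℝ → ℝ := fun θ => evAt θ a with hA
  set B : ℝ → ℝ := fun θ => evAt θ b with hB
  set CC : ℝ → ℝ := fun θ => evAt θ c with hCC
  set DD : ℝ → ℝ := fun θ => evAt θ d with hDD
  have e1 : ∀ θ : ℝ, A θ * F θ = Real.cos θ := by
    intro θ
    have h := congrArg (evAt θ) ha
    rwa [map_mul, hw₁, evAt_w₁] at h
  have e2 : ∀ θ : ℝ, B θ * F θ = 1 - Real.sin θ := by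
    intro θ
    have h := congrArg (evAt θ) hb
    rwa [map_mul, hv_def, map_sub, map_one, hw₂, evAt_w₂] at h
  have e3 : ∀ θ : ℝ, CC θ * Real.cos θ + DD θ * (1 - Real.sin θ) = F θ := by
    intro θ
    have h := congrArg (evAt θ) hcd
    rwa [map_add, map_mul, map_mul, hw₁, hv_def, map_sub, map_one, hw₂,
      evAt_w₁, evAt_w₂] at h
  have pi_pos := Real.pi_pos
  set a1 : ℝ := Real.pi / 2 with ha1
  set a2 : ℝ := Real.pi + Real.pi / 2 with ha2
  set a3 : ℝ := Real.pi / 2 + 2 * Real.pi with ha3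
  have h12 : a1 < a2 := by rw [ha1, ha2]; linarith
  have h23 : a2 < a3 := by rw [ha2, ha3]; linarith
  have h13 : a1 < a3 := h12.trans h23
  have hπmem : Real.pi ∈ Set.Ioo a1 a3 := ⟨by rw [ha1]; linarith, by rw [ha3]; linarith⟩
  have hFne : ∀ θ ∈ Set.Ioo a1 a3, F θ ≠ 0 := by
    intro θ hθ h0
    have hc : Real.cos θ = 0 := by rw [← e1 θ, h0, mul_zero]
    have hs : Real.sin θ = 1 := by have := e2 θ; rw [h0, mul_zero] at this; linarith
    rw [Real.sin_eq_one_iff] at hs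
    obtain ⟨k, hk⟩ := hs
    have h1 := hθ.1
    have h2 := hθ.2
    rw [ha1] at h1
    rw [ha3] at h2
    have hk0 : (0:ℝ) < (k:ℝ) := by nlinarith
    have hk1 : ((k:ℝ)) < 1 := by nlinarith
    have hk0' : (0:ℤ) < k := by exact_mod_cast hk0
    have hk1' : (k:ℤ) < 1 := by exact_mod_cast hk1
    omega
  have hsign : ∀ θ ∈ Set.Ioo a1 a3, 0 < F θ * F Real.pi := by
    intro θ hθ
    by_contra hcon
    push_neg at hcon
    have h0 : (0:ℝ) ∈ Set.uIcc (F θ) (F Real.pi) := by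
      rcases mul_nonpos_iff.1 hcon with ⟨h1, h2⟩ | ⟨h1, h2⟩
      · exact Set.mem_uIcc.2 (Or.inr ⟨h2, h1⟩)
      · exact Set.mem_uIcc.2 (Or.inl ⟨h1, h2⟩)
    obtain ⟨ζ, hζ, hζ0⟩ := intermediate_value_uIcc ((cont_evAt f).continuousOn) h0
    have hζmem : ζ ∈ Set.Ioo a1 a3 := (Set.ordConnected_Ioo).uIcc_subset hθ hπmem hζ
    exact hFne ζ hζmem hζ0
  have hFπ : F Real.pi ≠ 0 := hFne Real.pi hπmem
  -- identities at a1 via right limits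
  have hCA : CC a1 * A a1 + DD a1 * B a1 = 1 := by
    have hG : ∀ θ ∈ Set.Ioo a1 a3, CC θ * A θ + DD θ * B θ = 1 := by
      intro θ hθ
      apply mul_right_cancel₀ (hFne θ hθ)
      have h1 := e1 θ
      have h2 := e2 θ
      have h3 := e3 θ
      linear_combination CC θ * h1 + DD θ * h2 + h3
    have t1 : Filter.Tendsto (fun θ => CC θ * A θ + DD θ * B θ) (nhdsWithin a1 (Set.Ioi a1))
        (nhds (CC a1 * A a1 + DD a1 * B a1)) :=
      ((((cont_evAt c).mul (cont_evAt a)).add ((cont_evAt d).mul (cont_evAt b))).tendsto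
        a1).mono_left nhdsWithin_le_nhds
    have t2 : Filter.Tendsto (fun θ => CC θ * A θ + DD θ * B θ) (nhdsWithin a1 (Set.Ioi a1))
        (nhds 1) := by
      refine Filter.Tendsto.congr' ?_ tendsto_const_nhds
      filter_upwards [Ioo_mem_nhdsGT h13] with θ hθ
      exact (hG θ hθ).symm
    exact tendsto_nhds_unique t1 t2
  have hFa1 : F a1 = 0 := by
    have h3 := e3 a1
    rw [ha1, Real.cos_pi_div_two, Real.sin_pi_div_two] at h3
    rw [ha1]
    linarith [h3]
  have hBa1 : B a1 = 0 := by
    have hK : ∀ θ ∈ Set.Ioo a1 a3, A θ ^ 2 * F θ = B θ * (1 + Real.sin θ) := by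
      intro θ hθ
      apply mul_right_cancel₀ (hFne θ hθ)
      have h1 := e1 θ
      have h2 := e2 θ
      have pyth := Real.sin_sq_add_cos_sq θ
      linear_combination (A θ * F θ + Real.cos θ) * h1 - (1 + Real.sin θ) * h2 + pyth
    have t1 : Filter.Tendsto (fun θ => A θ ^ 2 * F θ - B θ * (1 + Real.sin θ))
        (nhdsWithin a1 (Set.Ioi a1))
        (nhds (A a1 ^ 2 * F a1 - B a1 * (1 + Real.sin a1))) :=
      ((((cont_evAt a).pow 2).mul (cont_evAt f)).sub
        ((cont_evAt b).mul (continuous_const.add Real.continuous_sin)) |>.tendsto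
          a1).mono_left nhdsWithin_le_nhds
    have t2 : Filter.Tendsto (fun θ => A θ ^ 2 * F θ - B θ * (1 + Real.sin θ))
        (nhdsWithin a1 (Set.Ioi a1)) (nhds 0) := by
      refine Filter.Tendsto.congr' ?_ tendsto_const_nhds
      filter_upwards [Ioo_mem_nhdsGT h13] with θ hθ
      linarith [hK θ hθ]
    have := tendsto_nhds_unique t1 t2
    rw [hFa1] at this
    have hsin : Real.sin a1 = 1 := by rw [ha1]; exact Real.sin_pi_div_two
    rw [hsin] at this
    linarith
  have hAa1 : A a1 ≠ 0 := by
    intro h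
    rw [h, hBa1] at hCA
    simp at hCA
  -- sign analysis
  have hneg : ∀ θ ∈ Set.Ioo a1 a2, A θ * F Real.pi < 0 := by
    intro θ hθ
    have hθ' : θ ∈ Set.Ioo a1 a3 := ⟨hθ.1, hθ.2.trans h23⟩
    have hcos : Real.cos θ < 0 := Real.cos_neg_of_pi_div_two_lt_of_lt hθ.1 hθ.2
    have h1 := e1 θ
    have hs := hsign θ hθ'
    have hF2 : 0 < F θ ^ 2 :=
      lt_of_le_of_ne (sq_nonneg _) (Ne.symm (pow_ne_zero 2 (hFne θ hθ')))
    nlinarith [hF2, hs, hcos, h1]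
  have hpos : ∀ θ ∈ Set.Ioo a2 a3, 0 < A θ * F Real.pi := by
    intro θ hθ
    have hθ' : θ ∈ Set.Ioo a1 a3 := ⟨h12.trans hθ.1, hθ.2⟩
    have hcos : 0 < Real.cos θ := by
      have hθ1 := hθ.1
      have hθ2 := hθ.2
      rw [ha2] at hθ1
      rw [ha3] at hθ2
      have : 0 < Real.cos (θ - 2 * Real.pi) :=
        Real.cos_pos_of_mem_Ioo ⟨by linarith, by linarith⟩
      rwa [Real.cos_sub_two_pi] at this
    have h1 := e1 θ
    have hs := hsign θ hθ'
    have hF2 : 0 < F θ ^ 2 :=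
      lt_of_le_of_ne (sq_nonneg _) (Ne.symm (pow_ne_zero 2 (hFne θ hθ')))
    nlinarith [hF2, hs, hcos, h1]
  have lim1 : A a1 * F Real.pi ≤ 0 := by
    have t1 : Filter.Tendsto (fun θ => A θ * F Real.pi) (nhdsWithin a1 (Set.Ioi a1))
        (nhds (A a1 * F Real.pi)) :=
      (((cont_evAt a).mul continuous_const).tendsto a1).mono_left nhdsWithin_le_nhds
    refine le_of_tendsto t1 ?_
    filter_upwards [Ioo_mem_nhdsGT h12] with θ hθ
    exact (hneg θ hθ).le
  have lim2 : 0 ≤ A a3 * F Real.pi := by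
    have t1 : Filter.Tendsto (fun θ => A θ * F Real.pi) (nhdsWithin a3 (Set.Iio a3))
        (nhds (A a3 * F Real.pi)) :=
      (((cont_evAt a).mul continuous_const).tendsto a3).mono_left nhdsWithin_le_nhds
    refine ge_of_tendsto t1 ?_
    filter_upwards [Ioo_mem_nhdsLT h23] with θ hθ
    exact (hpos θ hθ).le
  have hper : A a3 = A a1 := by
    rw [hA]
    rw [show a3 = a1 + 2 * Real.pi from by rw [ha1, ha3]]
    exact evAt_periodic a a1
  rw [hper] at lim2
  have : A a1 * F Real.pi = 0 := le_antisymm lim1 lim2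
  exact hAa1 ((mul_eq_zero.1 this).resolve_right hFπ)
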